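/- Let A : EuclideanSpace ℝ (Fin 3) → EuclideanSpace ℝ (Fin 3) be a surjective isometry such that A ∘ A = id, A(0) = 0, and 0 is an isolated fixed point of A (i.e. there is a punctured neighborhood of 0 containing no fixed points of A). Then A(u) = −u for every u ∈ EuclideanSpace ℝ (Fin 3). -/

import Mathlib

/-- A surjective isometric involution of Euclidean 3-space fixing the origin, whose
fixed point `0` is isolated (some punctured neighborhood of `0` contains no fixed
points), must be the antipodal map `u ↦ −u`. -/
theorem involution_isolated_fixed_point_eq_neg
    (A : EuclideanSpace ℝ (Fin 3) → EuclideanSpace ℝ (Fin 3))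
    (hsurj : Function.Surjective A) (hiso : Isometry A) (hinvol : A ∘ A = id)
    (h0 : A 0 = 0)
    (hisolated : ∃ U ∈ nhds (0 : EuclideanSpace ℝ (Fin 3)), ∀ u ∈ U, u ≠ 0 → A u ≠ u) :
    ∀ u, A u = -u := by
  have hbij : Function.Bijective A := ⟨hiso.injective, hsurj⟩
  let e : EuclideanSpace ℝ (Fin 3) ≃ᵢ EuclideanSpace ℝ (Fin 3) :=
    ⟨Equiv.ofBijective A hbij, hiso⟩
  have he : ⇑e = A := rfl
  let L := e.toRealLinearIsometryEquivOfMapZero (by simpa [he] using h0)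
  have hL : ⇑L = A := by
    rw [IsometryEquiv.coe_toRealLinearIsometryEquivOfMapZero, he]
  -- no nonzero fixed points
  have hfix : ∀ u, A u = u → u = 0 := by
    intro u hu
    by_contra hne
    obtain ⟨U, hU, hUfix⟩ := hisolated
    obtain ⟨ε, hε, hball⟩ := Metric.mem_nhds_iff.mp hU
    set t : ℝ := ε / (2 * ‖u‖)
    have hun : (0:ℝ) < ‖u‖ := norm_pos_iff.mpr hne
    have ht : 0 < t := div_pos hε (by positivity)
    have hv : t • u ∈ Metric.ball (0 : EuclideanSpace ℝ (Fin 3)) ε := by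
      simp only [Metric.mem_ball, dist_zero_right, norm_smul, Real.norm_eq_abs,
        abs_of_pos ht]
      calc t * ‖u‖ = ε / 2 := by simp only [t]; rw [div_mul_eq_mul_div, div_eq_div_iff (by positivity) (by norm_num)]; ring
        _ < ε := by linarith
    have hvne : t • u ≠ 0 := smul_ne_zero (ne_of_gt ht) hne
    refine hUfix (t • u) (hball hv) hvne ?_
    rw [← hL, map_smul, hL, hu]
  intro u
  have hfixsum : A (u + A u) = u + A u := by
    rw [← hL, map_add, hL]
    have : A (A u) = u := congrFun hinvol u
    rw [this, add_comm]
  have := hfix _ hfixsum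
  linear_combination (norm := module) this
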